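/- Let ∞ > q > p > 1, let s > 0 be given by e^{2s} = (q-1)/(p-1), let f be a bounded, compactly supported, nonnegative function on ℝ^d, let u(t,x) = e^{tL}(f^p)(x), and let Q(t) = ∫_{ℝ^d} (e^{sL}(u(t,·)^{1/p}))(x)^q dγ(x) for t > 0. Then lim_{t → ∞} Q(t) = ‖f‖_{L^p(γ)}^q. -/

import Mathlib

open MeasureTheory Real Filter

noncomputable section

/-- The standard Gaussian probability measure on `ℝ^d`. -/
def gaussianMeasure (d : ℕ) : Measure (EuclideanSpace ℝ (Fin d)) :=
  volume.withDensity fun y => ENNReal.ofReal ((2 * π) ^ (-(d : ℝ) / 2) * Real.exp (-‖y‖ ^ 2 / 2))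

/-- The Ornstein–Uhlenbeck semigroup `e^{sL} f (x) = ∫ f(e^{-s}x + (1-e^{-2s})^{1/2} y) dγ(y)`. -/
def OU (d : ℕ) (s : ℝ) (f : EuclideanSpace ℝ (Fin d) → ℝ) (x : EuclideanSpace ℝ (Fin d)) : ℝ :=
  ∫ y, f (Real.exp (-s) • x + Real.sqrt (1 - Real.exp (-2 * s)) • y) ∂(gaussianMeasure d)

/-- The Laplacian `Δf(x) = ∑ ∂²f/∂xᵢ²`. -/
def lap (d : ℕ) (f : EuclideanSpace ℝ (Fin d) → ℝ) (x : EuclideanSpace ℝ (Fin d)) : ℝ :=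
  ∑ i : Fin d,
    fderiv ℝ (fun z => fderiv ℝ f z (EuclideanSpace.single i 1)) x (EuclideanSpace.single i 1)

/-- The Ornstein–Uhlenbeck generator `Lf(x) = Δf(x) - x ⋅ ∇f(x)`. -/
def OUgen (d : ℕ) (f : EuclideanSpace ℝ (Fin d) → ℝ) (x : EuclideanSpace ℝ (Fin d)) : ℝ :=
  lap d f x - fderiv ℝ f x x

/-- A function is of polynomial growth if `|g(x)| ≤ C (1+|x|²)^{N/2}`. -/
def PolyGrowth {d : ℕ} (g : EuclideanSpace ℝ (Fin d) → ℝ) : Prop :=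
  ∃ C > (0 : ℝ), ∃ N : ℕ, ∀ x, |g x| ≤ C * (1 + ‖x‖ ^ 2) ^ ((N : ℝ) / 2)

/-- A time-dependent family is of polynomial growth locally uniformly in `t > 0` if on each
compact interval `[a,b] ⊂ (0,∞)` the constants may be chosen uniformly. -/
def PolyGrowthLocUnif {d : ℕ} (g : ℝ → EuclideanSpace ℝ (Fin d) → ℝ) : Prop :=
  ∀ a b : ℝ, 0 < a → a ≤ b → ∃ C > (0 : ℝ), ∃ N : ℕ,
    ∀ t ∈ Set.Icc a b, ∀ x, |g t x| ≤ C * (1 + ‖x‖ ^ 2) ^ ((N : ℝ) / 2)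

def gdens (d : ℕ) (y : EuclideanSpace ℝ (Fin d)) : ℝ :=
  (2 * π) ^ (-(d : ℝ) / 2) * Real.exp (-‖y‖ ^ 2 / 2)

lemma gdens_pos (d : ℕ) (y : EuclideanSpace ℝ (Fin d)) : 0 < gdens d y := by
  have : (0:ℝ) < 2 * π := by positivity
  exact mul_pos (Real.rpow_pos_of_pos this _) (Real.exp_pos _)

lemma gdens_continuous (d : ℕ) : Continuous (gdens d) := by
  unfold gdens
  fun_prop

lemma gdens_le (d : ℕ) (y : EuclideanSpace ℝ (Fin d)) : gdens d y ≤ (2 * π) ^ (-(d : ℝ) / 2) := by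
  have h1 : Real.exp (-‖y‖ ^ 2 / 2) ≤ 1 := by
    rw [Real.exp_le_one_iff]; nlinarith [sq_nonneg ‖y‖]
  have : (0:ℝ) < (2 * π) ^ (-(d : ℝ) / 2) := Real.rpow_pos_of_pos (by positivity) _
  calc gdens d y ≤ (2 * π) ^ (-(d : ℝ) / 2) * 1 := by
        exact mul_le_mul_of_nonneg_left h1 this.le
    _ = _ := mul_one _

lemma integral_gaussianMeasure {d : ℕ} (g : EuclideanSpace ℝ (Fin d) → ℝ) :
    ∫ y, g y ∂(gaussianMeasure d) = ∫ y, gdens d y * g y := by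
  have hd : gaussianMeasure d = volume.withDensity fun y => ((gdens d y).toNNReal : ENNReal) := by
    unfold gaussianMeasure
    congr 1
  rw [hd, integral_withDensity_eq_integral_smul (by
    exact (gdens_continuous d).measurable.real_toNNReal) g]
  congr 1
  ext y
  simp [NNReal.smul_def, Real.coe_toNNReal _ (gdens_pos d y).le]

lemma integral_gdens (d : ℕ) : ∫ y : EuclideanSpace ℝ (Fin d), gdens d y = 1 := by
  unfold gdens
  rw [integral_const_mul]
  have : ∀ y : EuclideanSpace ℝ (Fin d), Real.exp (-‖y‖ ^ 2 / 2) = Real.exp (-(1/2) * ‖y‖^2) := by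
    intro y; ring_nf
  simp_rw [this]
  rw [GaussianFourier.integral_rexp_neg_mul_sq_norm (by norm_num : (0:ℝ) < 1/2)]
  have hdim : (Module.finrank ℝ (EuclideanSpace ℝ (Fin d)) : ℝ) = d := by
    simp [finrank_euclideanSpace_fin]
  rw [hdim]
  rw [show π / (1/2 : ℝ) = 2 * π by ring]
  rw [← Real.rpow_add (by positivity)]
  rw [show -(d:ℝ)/2 + (d:ℝ)/2 = 0 by ring, Real.rpow_zero]

lemma integrable_gdens (d : ℕ) : Integrable (gdens d) := by
  unfold gdens
  apply Integrable.const_mul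
  have : ∀ y : EuclideanSpace ℝ (Fin d), Real.exp (-‖y‖ ^ 2 / 2) = Real.exp (-(1/2) * ‖y‖^2) := by
    intro y; ring_nf
  simp_rw [this]
  have h := (GaussianFourier.integrable_cexp_neg_mul_sq_norm_add
    (b := ((1:ℂ)/2)) (by norm_num) 0 (0 : EuclideanSpace ℝ (Fin d))).re
  apply h.congr
  filter_upwards with y
  simp only [zero_mul, add_zero]
  rw [show -((1:ℂ)/2) * (‖y‖:ℂ) ^ 2 = ((-(1/2) * ‖y‖^2 : ℝ) : ℂ) by push_cast; ring]
  exact Complex.exp_ofReal_re _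

instance gaussian_prob (d : ℕ) : IsProbabilityMeasure (gaussianMeasure d) := by
  constructor
  unfold gaussianMeasure
  rw [withDensity_apply _ MeasurableSet.univ, setLIntegral_univ]
  have hh : ∀ y : EuclideanSpace ℝ (Fin d), (2 * π) ^ (-(d:ℝ) / 2) * rexp (-‖y‖ ^ 2 / 2) = gdens d y := fun y => rfl
  simp_rw [hh]
  rw [← ofReal_integral_eq_lintegral_ofReal (integrable_gdens d) (ae_of_all _ fun y => (gdens_pos d y).le)]
  rw [integral_gdens]
  simp

lemma changevar (d : ℕ) (g : EuclideanSpace ℝ (Fin d) → ℝ) (a : EuclideanSpace ℝ (Fin d))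
    (c : ℝ) (hc : 0 < c) :
    ∫ y, gdens d y * g (a + c • y) = ∫ z, (c ^ d)⁻¹ * (gdens d (c⁻¹ • (z - a)) * g z) := by
  have hrank : Module.finrank ℝ (EuclideanSpace ℝ (Fin d)) = d := finrank_euclideanSpace_fin
  set F : EuclideanSpace ℝ (Fin d) → ℝ := fun z => (c ^ d)⁻¹ * (gdens d (c⁻¹ • (z - a)) * g z)
    with hF
  have h1 : ∫ z, F z = ∫ w, F (w + a) := (integral_add_right_eq_self F a).symm
  have h2 : ∫ y, F (c • y + a) = (c ^ d)⁻¹ • ∫ w, F (w + a) := by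
    have := Measure.integral_comp_smul_of_nonneg volume (fun w => F (w + a)) c (hR := hc.le)
    rwa [hrank] at this
  have h3 : ∀ y, F (c • y + a) = (c ^ d)⁻¹ * (gdens d y * g (a + c • y)) := by
    intro y
    have : c⁻¹ • (c • y + a - a) = y := by
      rw [add_sub_cancel_right, smul_smul, inv_mul_cancel₀ hc.ne', one_smul]
    have h' : c⁻¹ • (a + c • y - a) = y := by rw [add_sub_cancel_left, smul_smul, inv_mul_cancel₀ hc.ne', one_smul]
    rw [hF]
    simp only [add_comm, h']
  have hcd : (0:ℝ) < c ^ d := pow_pos hc d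
  calc ∫ y, gdens d y * g (a + c • y)
      = (c ^ d) * ∫ y, (c ^ d)⁻¹ * (gdens d y * g (a + c • y)) := by
        rw [integral_const_mul, ← mul_assoc, mul_inv_cancel₀ hcd.ne', one_mul]
    _ = (c ^ d) * ∫ y, F (c • y + a) := by simp_rw [h3]
    _ = (c ^ d) * ((c ^ d)⁻¹ • ∫ w, F (w + a)) := by rw [h2]
    _ = ∫ w, F (w + a) := by
        rw [smul_eq_mul, ← mul_assoc, mul_inv_cancel₀ hcd.ne', one_mul]
    _ = ∫ z, F z := h1.symm

lemma OU_nonneg (d : ℕ) (t : ℝ) (g : EuclideanSpace ℝ (Fin d) → ℝ) (hg : ∀ z, 0 ≤ g z)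
    (x : EuclideanSpace ℝ (Fin d)) : 0 ≤ OU d t g x :=
  integral_nonneg fun y => hg _

lemma OU_le_const (d : ℕ) (t : ℝ) (g : EuclideanSpace ℝ (Fin d) → ℝ) (M : ℝ)
    (hg : ∀ z, 0 ≤ g z) (hgM : ∀ z, g z ≤ M) (x : EuclideanSpace ℝ (Fin d)) :
    OU d t g x ≤ M := by
  have : OU d t g x ≤ ∫ _y, M ∂(gaussianMeasure d) :=
    integral_mono_of_nonneg (ae_of_all _ fun y => hg _) (integrable_const M)
      (ae_of_all _ fun y => hgM _)
  simpa using this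

lemma OU_measurable (d : ℕ) (t : ℝ) (g : EuclideanSpace ℝ (Fin d) → ℝ) (hg : Measurable g) :
    Measurable (fun x => OU d t g x) := by
  have hjoint : StronglyMeasurable fun pr : EuclideanSpace ℝ (Fin d) × EuclideanSpace ℝ (Fin d) =>
      g (Real.exp (-t) • pr.1 + Real.sqrt (1 - Real.exp (-2 * t)) • pr.2) := by
    apply Measurable.stronglyMeasurable
    apply hg.comp
    fun_prop
  exact hjoint.integral_prod_right'.measurable

lemma tendsto_OU (d : ℕ) (g : EuclideanSpace ℝ (Fin d) → ℝ) (hg : Measurable g) (M : ℝ)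
    (hgb : ∀ z, |g z| ≤ M) (hgs : HasCompactSupport g) (x : EuclideanSpace ℝ (Fin d)) :
    Tendsto (fun t => OU d t g x) atTop (nhds (∫ z, g z ∂(gaussianMeasure d))) := by
  set c : ℝ → ℝ := fun t => Real.sqrt (1 - Real.exp (-2 * t)) with hc
  set a : ℝ → EuclideanSpace ℝ (Fin d) := fun t => Real.exp (-t) • x with ha
  set φ : ℝ → EuclideanSpace ℝ (Fin d) → ℝ :=
    fun t z => ((c t) ^ d)⁻¹ * (gdens d ((c t)⁻¹ • (z - a t)) * g z) with hφ
  have hM0 : 0 ≤ M := le_trans (abs_nonneg _) (hgb 0)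
  have hc_pos : ∀ t : ℝ, 0 < t → 0 < c t := by
    intro t ht
    apply Real.sqrt_pos.2
    have : Real.exp (-2 * t) < 1 := Real.exp_lt_one_iff.2 (by linarith)
    linarith
  -- c tends to 1
  have hexp0 : Tendsto (fun t : ℝ => Real.exp (-2 * t)) atTop (nhds 0) := by
    have h2 : Tendsto (fun t : ℝ => 2 * t) atTop atTop :=
      Tendsto.const_mul_atTop two_pos tendsto_id
    have h3 := Real.tendsto_exp_neg_atTop_nhds_zero.comp h2
    apply h3.congr
    intro t
    simp [Function.comp, neg_mul]
  have hct : Tendsto c atTop (nhds 1) := by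
    have h1 : Tendsto (fun t : ℝ => 1 - Real.exp (-2 * t)) atTop (nhds 1) := by
      simpa using (tendsto_const_nhds (x := (1:ℝ)) (f := atTop)).sub hexp0
    have h4 := h1.sqrt
    rw [Real.sqrt_one] at h4
    exact h4
  have hat : Tendsto a atTop (nhds 0) := by
    have hexp : Tendsto (fun t : ℝ => Real.exp (-t)) atTop (nhds 0) := by
      simpa [Function.comp] using Real.tendsto_exp_neg_atTop_nhds_zero
    have := hexp.smul_const x
    simpa using this
  -- monotone lower bound for c on [1, ∞)
  have hc1 : 0 < c 1 := hc_pos 1 one_pos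
  have hc_lb : ∀ t : ℝ, 1 ≤ t → c 1 ≤ c t := by
    intro t ht
    apply Real.sqrt_le_sqrt
    have : Real.exp (-2 * t) ≤ Real.exp (-2 * 1) := by
      apply Real.exp_le_exp.2; linarith
    linarith
  -- the eventual formula
  have hformula : ∀ᶠ t in atTop, OU d t g x = ∫ z, φ t z := by
    filter_upwards [eventually_gt_atTop (0:ℝ)] with t ht
    have h1 : OU d t g x = ∫ y, gdens d y * g (a t + c t • y) :=
      integral_gaussianMeasure _
    rw [h1, changevar d g (a t) (c t) (hc_pos t ht)]
  -- measurability of φ t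
  have hφmeas : ∀ t : ℝ, AEStronglyMeasurable (φ t) volume := by
    intro t
    apply Measurable.aestronglyMeasurable
    apply Measurable.const_mul
    apply Measurable.mul _ hg
    exact ((gdens_continuous d).comp (by fun_prop : Continuous
      (fun z : EuclideanSpace ℝ (Fin d) => (c t)⁻¹ • (z - a t)))).measurable
  -- bound
  set C : ℝ := ((c 1) ^ d)⁻¹ * ((2 * π) ^ (-(d:ℝ) / 2) * M) with hC
  have hC0 : 0 ≤ C := by
    apply mul_nonneg (inv_nonneg.2 (pow_nonneg hc1.le d))
    exact mul_nonneg (Real.rpow_nonneg (by positivity) _) hM0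
  have hbound : ∀ᶠ t in atTop, ∀ᵐ z : EuclideanSpace ℝ (Fin d), ‖φ t z‖ ≤
      (tsupport g).indicator (fun _ => C) z := by
    filter_upwards [eventually_ge_atTop (1:ℝ)] with t ht
    apply ae_of_all
    intro z
    by_cases hz : z ∈ tsupport g
    · rw [Set.indicator_of_mem hz]
      have hct0 : 0 < c t := hc_pos t (by linarith)
      have hgd := gdens_pos d ((c t)⁻¹ • (z - a t))
      rw [Real.norm_eq_abs, abs_mul, abs_mul]
      rw [abs_of_nonneg (inv_nonneg.2 (pow_nonneg hct0.le d)), abs_of_nonneg hgd.le]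
      apply mul_le_mul _ _ (mul_nonneg hgd.le (abs_nonneg _))
        (inv_nonneg.2 (pow_nonneg hc1.le d))
      · apply inv_anti₀ (pow_pos hc1 d)
        exact pow_le_pow_left₀ hc1.le (hc_lb t ht) d
      · exact mul_le_mul (gdens_le d _) (hgb z) (abs_nonneg _)
          (Real.rpow_nonneg (by positivity) _)
    · have : g z = 0 := image_eq_zero_of_notMem_tsupport hz
      rw [Set.indicator_of_notMem hz]
      simp [hφ, this]
  have hbound_int : Integrable ((tsupport g).indicator (fun _ => C)) volume := by
    rw [integrable_indicator_iff (isClosed_tsupport g).measurableSet]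
    exact integrableOn_const hgs.measure_lt_top.ne
  -- pointwise limit
  have hlim : ∀ᵐ z : EuclideanSpace ℝ (Fin d), Tendsto (fun t => φ t z) atTop
      (nhds (gdens d z * g z)) := by
    apply ae_of_all
    intro z
    have h1 : Tendsto (fun t => ((c t) ^ d)⁻¹) atTop (nhds 1) := by
      have := (hct.pow d).inv₀ (by norm_num)
      simpa using this
    have h2 : Tendsto (fun t => (c t)⁻¹ • (z - a t)) atTop (nhds z) := by
      have := (hct.inv₀ one_ne_zero).smul ((tendsto_const_nhds (x := z) (f := atTop)).sub hat)
      simpa using this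
    have h3 : Tendsto (fun t => gdens d ((c t)⁻¹ • (z - a t))) atTop (nhds (gdens d z)) :=
      ((gdens_continuous d).continuousAt.tendsto).comp h2
    have := h1.mul (h3.mul (tendsto_const_nhds (x := g z) (f := atTop)))
    simpa using this
  have key := tendsto_integral_filter_of_dominated_convergence
    ((tsupport g).indicator (fun _ => C)) (Eventually.of_forall hφmeas) hbound hbound_int hlim
  have htarget : ∫ z, gdens d z * g z = ∫ z, g z ∂(gaussianMeasure d) :=
    (integral_gaussianMeasure _).symm
  rw [htarget] at key
  exact key.congr' (hformula.mono fun t ht => ht.symm)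

/-- `lim_{t→∞} Q(t) = ‖f‖_{L^p(γ)}^q`. -/
theorem Q_limit_at_infinity_OU
    (d : ℕ) (hd : 1 ≤ d) (p q s : ℝ) (hp : 1 < p) (hpq : p < q) (hs : 0 < s)
    (hseq : Real.exp (2 * s) = (q - 1) / (p - 1))
    (f : EuclideanSpace ℝ (Fin d) → ℝ) (hmeas : Measurable f)
    (hbdd : ∃ M : ℝ, ∀ x, f x ≤ M) (hnn : ∀ x, 0 ≤ f x)
    (hsupp : HasCompactSupport f)
    (u : ℝ → EuclideanSpace ℝ (Fin d) → ℝ)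
    (hu : ∀ t > (0 : ℝ), ∀ x, u t x = OU d t (fun z => f z ^ p) x)
    (Q : ℝ → ℝ)
    (hQ : ∀ t > (0 : ℝ),
      Q t = ∫ x, (OU d s (fun z => u t z ^ (1 / p)) x) ^ q ∂(gaussianMeasure d)) :
    Filter.Tendsto Q Filter.atTop
      (nhds ((∫ x, |f x| ^ p ∂(gaussianMeasure d)) ^ (q / p))) := by

  obtain ⟨M, hM⟩ := hbdd
  have hM0 : 0 ≤ M := le_trans (hnn 0) (hM 0)
  have hp0 : (0:ℝ) < p := by linarith
  have hq0 : (0:ℝ) < q := by linarith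
  -- the function g = f^p
  set g : EuclideanSpace ℝ (Fin d) → ℝ := fun z => f z ^ p with hg
  have hrpowmeas : ∀ c : ℝ, 0 ≤ c → ∀ {h : EuclideanSpace ℝ (Fin d) → ℝ}, Measurable h →
      Measurable (fun z => h z ^ c) := fun c hc h hh =>
    (Real.continuous_rpow_const hc).measurable.comp hh
  have hgmeas : Measurable g := hrpowmeas p hp0.le hmeas
  have hgnn : ∀ z, 0 ≤ g z := fun z => Real.rpow_nonneg (hnn z) p
  have hgle : ∀ z, g z ≤ M ^ p := fun z => Real.rpow_le_rpow (hnn z) (hM z) hp0.le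
  have hgabs : ∀ z, |g z| ≤ M ^ p := fun z => by
    rw [abs_of_nonneg (hgnn z)]; exact hgle z
  have hgsupp : HasCompactSupport g := by
    have : g = (fun r : ℝ => r ^ p) ∘ f := rfl
    rw [this]
    exact hsupp.comp_left (Real.zero_rpow hp0.ne')
  set A : ℝ := ∫ z, g z ∂(gaussianMeasure d) with hA
  have hA0 : 0 ≤ A := integral_nonneg hgnn
  have htarget : ∫ x, |f x| ^ p ∂(gaussianMeasure d) = A := by
    rw [hA]
    congr 1
    funext x
    rw [abs_of_nonneg (hnn x)]
  rw [htarget]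
  -- Step A: u t w → A for every w
  have stepA : ∀ w, Tendsto (fun t => u t w) atTop (nhds A) := by
    intro w
    apply (tendsto_OU d g hgmeas (M ^ p) hgabs hgsupp w).congr'
    filter_upwards [eventually_gt_atTop (0:ℝ)] with t ht
    exact (hu t ht w).symm
  -- bounds on u for t > 0
  have hu_nn : ∀ t : ℝ, 0 < t → ∀ w, 0 ≤ u t w := fun t ht w => by
    rw [hu t ht w]; exact OU_nonneg d t g hgnn w
  have hu_le : ∀ t : ℝ, 0 < t → ∀ w, u t w ≤ M ^ p := fun t ht w => by
    rw [hu t ht w]; exact OU_le_const d t g (M ^ p) hgnn hgle w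
  have hroot_le : ∀ t : ℝ, 0 < t → ∀ w, u t w ^ (1/p) ≤ M := by
    intro t ht w
    have := Real.rpow_le_rpow (hu_nn t ht w) (hu_le t ht w) (by positivity : (0:ℝ) ≤ 1/p)
    rwa [← Real.rpow_mul hM0, mul_one_div, div_self hp0.ne', Real.rpow_one] at this
  have hroot_nn : ∀ t : ℝ, 0 < t → ∀ w, 0 ≤ u t w ^ (1/p) := fun t ht w =>
    Real.rpow_nonneg (hu_nn t ht w) _
  have hu_meas : ∀ t : ℝ, 0 < t → Measurable (u t) := by
    intro t ht
    have : u t = fun w => OU d t g w := funext (hu t ht)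
    rw [this]
    exact OU_measurable d t g hgmeas
  -- Step B : OU d s ((u t)^{1/p}) x → A^{1/p}
  have stepB : ∀ x, Tendsto (fun t => OU d s (fun z => u t z ^ (1/p)) x) atTop
      (nhds (A ^ (1/p))) := by
    intro x
    have key := tendsto_integral_filter_of_dominated_convergence
      (μ := gaussianMeasure d)
      (F := fun t (y : EuclideanSpace ℝ (Fin d)) =>
        u t (Real.exp (-s) • x + Real.sqrt (1 - Real.exp (-2 * s)) • y) ^ (1/p))
      (f := fun _ => A ^ (1/p)) (bound := fun _ => M)
      (by
        filter_upwards [eventually_gt_atTop (0:ℝ)] with t ht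
        exact (hrpowmeas (1/p) (by positivity)
          ((hu_meas t ht).comp (by fun_prop))).aestronglyMeasurable)
      (by
        filter_upwards [eventually_gt_atTop (0:ℝ)] with t ht
        apply ae_of_all
        intro y
        rw [Real.norm_eq_abs, abs_of_nonneg (hroot_nn t ht _)]
        exact hroot_le t ht _)
      (integrable_const M)
      (by
        apply ae_of_all
        intro y
        exact ((Real.continuousAt_rpow_const A (1/p)
          (Or.inr (by positivity))).tendsto).comp (stepA _))
    have hconst : ∫ (_ : EuclideanSpace ℝ (Fin d)), A ^ (1/p) ∂(gaussianMeasure d)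
        = A ^ (1/p) := by simp
    rw [hconst] at key
    exact key
  -- Step C : conclude
  have hOUs_nn : ∀ t : ℝ, 0 < t → ∀ x, 0 ≤ OU d s (fun z => u t z ^ (1/p)) x := fun t ht x =>
    OU_nonneg d s _ (hroot_nn t ht) x
  have hOUs_le : ∀ t : ℝ, 0 < t → ∀ x, OU d s (fun z => u t z ^ (1/p)) x ≤ M := fun t ht x =>
    OU_le_const d s _ M (hroot_nn t ht) (hroot_le t ht) x
  have key := tendsto_integral_filter_of_dominated_convergence
    (μ := gaussianMeasure d)
    (F := fun t (x : EuclideanSpace ℝ (Fin d)) => (OU d s (fun z => u t z ^ (1/p)) x) ^ q)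
    (f := fun _ => (A ^ (1/p)) ^ q) (bound := fun _ => M ^ q)
    (by
      filter_upwards [eventually_gt_atTop (0:ℝ)] with t ht
      exact (hrpowmeas q hq0.le (OU_measurable d s _
        (hrpowmeas (1/p) (by positivity) (hu_meas t ht)))).aestronglyMeasurable)
    (by
      filter_upwards [eventually_gt_atTop (0:ℝ)] with t ht
      apply ae_of_all
      intro x
      rw [Real.norm_eq_abs, abs_of_nonneg (Real.rpow_nonneg (hOUs_nn t ht x) q)]
      exact Real.rpow_le_rpow (hOUs_nn t ht x) (hOUs_le t ht x) hq0.le)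
    (integrable_const (M ^ q))
    (by
      apply ae_of_all
      intro x
      exact ((Real.continuousAt_rpow_const (A ^ (1/p)) q
        (Or.inr hq0.le)).tendsto).comp (stepB x))
  have hval : ∫ (_x : EuclideanSpace ℝ (Fin d)), (A ^ (1/p)) ^ q ∂(gaussianMeasure d)
      = A ^ (q / p) := by
    rw [integral_const, probReal_univ, one_smul,
      ← Real.rpow_mul hA0, one_div_mul_eq_div]
  rw [hval] at key
  apply key.congr'
  filter_upwards [eventually_gt_atTop (0:ℝ)] with t ht
  exact (hQ t ht).symm
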